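/- arXiv:1002.1833 — 2 statements merged into one kernel-verified Lean document; each statement's English description precedes it below -/
import Mathlib

section
/- If two partial expressions e and e' are n-extensionally equivalent, then they are m-extensionally equivalent for every m > n. -/
/-- A signature: function symbols and constructor symbols, each with an arity. -/
structure Sig where
  FS : Type
  CS : Type
  arityF : FS → ℕ
  arityC : CS → ℕ

/-- Applicative partial expressions over a signature.  Variables are natural
numbers and `bot` is the distinguished 0-ary constructor `⊥`. -/
inductive Exp (σ : Sig) : Type where
  | var : ℕ → Exp σ
  | fn : σ.FS → Exp σ
  | cn : σ.CS → Exp σ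
  | bot : Exp σ
  | app : Exp σ → Exp σ → Exp σ

variable {σ : Sig}

/-- `applyList e [e1, …, en]` is the curried application `e e1 … en`. -/
def applyList (e : Exp σ) (es : List (Exp σ)) : Exp σ := es.foldl Exp.app e

/-- Partial patterns `Pat_⊥`. -/
inductive IsPPat : Exp σ → Prop where
  | var (x : ℕ) : IsPPat (Exp.var x)
  | bot : IsPPat (Exp.bot : Exp σ)
  | capp (c : σ.CS) (ts : List (Exp σ)) (har : ts.length ≤ σ.arityC c)
      (hts : ∀ t ∈ ts, IsPPat t) : IsPPat (applyList (Exp.cn c) ts)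
  | fapp (f : σ.FS) (ts : List (Exp σ)) (har : ts.length < σ.arityF f)
      (hts : ∀ t ∈ ts, IsPPat t) : IsPPat (applyList (Exp.fn f) ts)

/-- The constructor `⊥` does not occur in the expression. -/
def BotFree : Exp σ → Prop
  | .bot => False
  | .app a b => BotFree a ∧ BotFree b
  | _ => True

/-- Total patterns `Pat`. -/
def IsPat (t : Exp σ) : Prop := IsPPat t ∧ BotFree t

/-- First-order patterns `FOPat`. -/
inductive IsFOPat : Exp σ → Prop where
  | var (x : ℕ) : IsFOPat (Exp.var x)
  | capp (c : σ.CS) (ts : List (Exp σ)) (har : ts.length = σ.arityC c)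
      (hts : ∀ t ∈ ts, IsFOPat t) : IsFOPat (applyList (Exp.cn c) ts)

/-- The list of occurrences of variables in an expression. -/
def occVars : Exp σ → List ℕ
  | .var x => [x]
  | .app a b => occVars a ++ occVars b
  | _ => []

/-- Applying a substitution to an expression. -/
def subst (θ : ℕ → Exp σ) : Exp σ → Exp σ
  | .var x => θ x
  | .fn f => .fn f
  | .cn c => .cn c
  | .bot => .bot
  | .app a b => .app (subst θ a) (subst θ b)

/-- Partial-pattern substitutions `PSubst_⊥`. -/
def PSub (θ : ℕ → Exp σ) : Prop := ∀ x, IsPPat (θ x)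

/-- A program rule `f t1 … tn → r` (the left-hand side is `f` applied to `lhs`). -/
structure Rule (σ : Sig) where
  fn : σ.FS
  lhs : List (Exp σ)
  rhs : Exp σ

/-- Well-formedness of a rule: `f` is applied to as many arguments as its arity,
the arguments form a linear tuple of total patterns. -/
def Rule.WF (r : Rule σ) : Prop :=
  r.lhs.length = σ.arityF r.fn ∧ (∀ t ∈ r.lhs, IsPat t) ∧
    (r.lhs.flatMap occVars).Nodup

/-- The rule has no extra variables: all variables of the right-hand side occur
in the left-hand side. -/
def Rule.NoExtra (r : Rule σ) : Prop :=
  ∀ x ∈ occVars r.rhs, x ∈ r.lhs.flatMap occVars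

abbrev Program (σ : Sig) := Set (Rule σ)

/-- A program without extra variables, all whose rules are well formed. -/
def WFProg (P : Program σ) : Prop := ∀ r ∈ P, r.WF ∧ r.NoExtra

/-- `h ∈ Σ` (a function symbol, a constructor symbol, or `⊥`). -/
def IsSymb : Exp σ → Prop
  | .fn _ => True
  | .cn _ => True
  | .bot => True
  | _ => False

/-- HOCRWL derivation trees for statements `e ⇒ t`, with rules
(B), (RR), (DC) and (OR). -/
inductive DTree (P : Program σ) : Exp σ → Exp σ → Type where
  | bot (e : Exp σ) : DTree P e Exp.bot
  | rr (x : ℕ) : DTree P (Exp.var x) (Exp.var x)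
  | dc (h : Exp σ) (es ts : List (Exp σ)) (hsym : IsSymb h)
      (hlen : es.length = ts.length) (hpat : IsPPat (applyList h ts))
      (ds : ∀ p ∈ es.zip ts, DTree P p.1 p.2) :
      DTree P (applyList h es) (applyList h ts)
  | opr (r : Rule σ) (hr : r ∈ P) (θ : ℕ → Exp σ) (hθ : PSub θ)
      (es as : List (Exp σ)) (t : Exp σ) (hlen : es.length = r.lhs.length)
      (ds : ∀ p ∈ es.zip (r.lhs.map (subst θ)), DTree P p.1 p.2)
      (d : DTree P (applyList (subst θ r.rhs) as) t) :
      DTree P (applyList (Exp.fn r.fn) (es ++ as)) t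

/-- `P ⊢ e ⇒ t` is derivable in the HOCRWL proof calculus. -/
def Deriv (P : Program σ) (e t : Exp σ) : Prop := Nonempty (DTree P e t)

/-- The HOCRWL denotation `⟦e⟧^P = { t ∈ Pat_⊥ | P ⊢ e ⇒ t }`. -/
def den (P : Program σ) (e : Exp σ) : Set (Exp σ) := {t | IsPPat t ∧ Deriv P e t}

/-- Observations: total patterns in the denotation. -/
def Obs (P : Program σ) (e : Exp σ) : Set (Exp σ) := {t | t ∈ den P e ∧ BotFree t}

/-- First-order observations: first-order patterns in the denotation. -/
def ObsFO (P : Program σ) (e : Exp σ) : Set (Exp σ) := {t | t ∈ den P e ∧ IsFOPat t}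

/-- Contexts `C ::= [ ] | C e | e C`. -/
inductive Cntxt (σ : Sig) : Type where
  | hole : Cntxt σ
  | appL : Cntxt σ → Exp σ → Cntxt σ
  | appR : Exp σ → Cntxt σ → Cntxt σ

/-- Filling the hole of a context with an expression. -/
def Cntxt.fill : Cntxt σ → Exp σ → Exp σ
  | .hole, e => e
  | .appL C e', e => .app (C.fill e) e'
  | .appR e' C, e => .app e' (C.fill e)

/-- Function symbols occurring in an expression. -/
def expFS : Exp σ → Set σ.FS
  | .fn f => {f}
  | .app a b => expFS a ∪ expFS b
  | _ => ∅

/-- Function symbols occurring in a rule. -/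
def ruleFS (r : Rule σ) : Set σ.FS :=
  insert r.fn ((⋃ t ∈ r.lhs, expFS t) ∪ expFS r.rhs)

/-- Function symbols occurring in a program. -/
def progFS (P : Program σ) : Set σ.FS := ⋃ r ∈ P, ruleFS r

/-- Function symbols defined by a program (roots of left-hand sides). -/
def defs (P : Program σ) : Set σ.FS := Rule.fn '' P

/-- `P'` is a safe extension of `(P, e)`: `P' = P ⊎ P''` where `P''` defines no
function symbol occurring in `P` or in `e`. -/
def SafeExt (P P' : Program σ) (e : Exp σ) : Prop :=
  ∃ P'' : Program σ, P' = P ∪ P'' ∧ Disjoint P P'' ∧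
    Disjoint (defs P'') (expFS e ∪ progFS P)

/-- `e ∼ₙ e'` : `n`-extensional equivalence. -/
def ExtEquiv (P : Program σ) (n : ℕ) (e e' : Exp σ) : Prop :=
  ∀ es : List (Exp σ), es.length = n →
    den P (applyList e es) = den P (applyList e' es)

section ExtAux

variable {σ : Sig} {P : Program σ}

theorem applyList_append' (e : Exp σ) (l l' : List (Exp σ)) :
    applyList e (l ++ l') = applyList (applyList e l) l' :=
  List.foldl_append

theorem applyList_cons' (e a : Exp σ) (l : List (Exp σ)) :
    applyList e (a :: l) = applyList (e.app a) l := rfl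

theorem applyList_concat (e : Exp σ) (l : List (Exp σ)) (a : Exp σ) :
    applyList e (l ++ [a]) = .app (applyList e l) a := by
  rw [applyList_append']; rfl

/-- head of the application spine -/
def headE : Exp σ → Exp σ
  | .app a _ => headE a
  | e => e

/-- arguments of the application spine -/
def argsE : Exp σ → List (Exp σ)
  | .app a b => argsE a ++ [b]
  | _ => []

theorem headE_applyList (e : Exp σ) (l : List (Exp σ)) :
    headE (applyList e l) = headE e := by
  induction l generalizing e with
  | nil => rfl
  | cons a l ih => rw [applyList_cons', ih]; rfl

theorem argsE_applyList (e : Exp σ) (l : List (Exp σ)) :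
    argsE (applyList e l) = argsE e ++ l := by
  induction l generalizing e with
  | nil => simp [applyList]
  | cons a l ih => rw [applyList_cons', ih]; simp [argsE]

theorem symb_headE {h : Exp σ} (hs : IsSymb h) : headE h = h := by
  cases h <;> simp [IsSymb, headE] at *

theorem symb_argsE {h : Exp σ} (hs : IsSymb h) : argsE h = [] := by
  cases h <;> simp [IsSymb, argsE] at *

theorem applyList_inj {h h' : Exp σ} {l l' : List (Exp σ)}
    (hs : IsSymb h) (hs' : IsSymb h')
    (heq : applyList h l = applyList h' l') : h = h' ∧ l = l' := by
  constructor
  · have := congrArg headE heq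
    rwa [headE_applyList, headE_applyList, symb_headE hs, symb_headE hs'] at this
  · have := congrArg argsE heq
    rwa [argsE_applyList, argsE_applyList, symb_argsE hs, symb_argsE hs',
      List.nil_append, List.nil_append] at this

theorem applyList_eq_var {h : Exp σ} {l : List (Exp σ)} {x : ℕ}
    (hs : IsSymb h) (heq : applyList h l = .var x) : False := by
  have h1 := congrArg argsE heq
  rw [argsE_applyList, symb_argsE hs, List.nil_append] at h1
  simp only [argsE] at h1
  subst h1
  simp only [applyList, List.foldl_nil] at heq
  subst heq; simp [IsSymb] at hs

theorem isSymb_fn (f : σ.FS) : IsSymb (Exp.fn f : Exp σ) := by simp [IsSymb]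
theorem isSymb_cn (c : σ.CS) : IsSymb (Exp.cn c : Exp σ) := by simp [IsSymb]
theorem isSymb_bot : IsSymb (Exp.bot : Exp σ) := by simp [IsSymb]

theorem applyList_eq_bot {h : Exp σ} {l : List (Exp σ)}
    (hs : IsSymb h) (heq : applyList h l = .bot) : h = .bot ∧ l = [] :=
  applyList_inj hs isSymb_bot (heq.trans rfl)

theorem app_eq_applyList {h A c : Exp σ} {es : List (Exp σ)}
    (hs : IsSymb h) (heq : Exp.app A c = applyList h es) :
    ∃ es₀, es = es₀ ++ [c] ∧ A = applyList h es₀ := by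
  rcases es.eq_nil_or_concat with rfl | ⟨es₀, b, rfl⟩
  · simp only [applyList, List.foldl_nil] at heq
    subst heq; simp [IsSymb] at hs
  · rw [List.concat_eq_append] at *
    rw [applyList_concat] at heq
    injection heq with h1 h2
    exact ⟨es₀, by rw [h2], h1⟩

theorem pat_fn_len {f : σ.FS} {L : List (Exp σ)}
    (hp : IsPPat (applyList (.fn f) L)) : L.length < σ.arityF f := by
  generalize hE : applyList (Exp.fn f) L = E at hp
  cases hp with
  | var x => exact absurd hE (fun hh => applyList_eq_var (isSymb_fn f) hh)
  | bot => exact absurd (applyList_eq_bot (isSymb_fn f) hE).1 (by simp)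
  | capp c us har hts =>
    obtain ⟨h1, -⟩ := applyList_inj (isSymb_fn f) (isSymb_cn c) (hE.trans rfl)
    exact absurd h1 (by simp)
  | fapp f' us har hts =>
    obtain ⟨h1, h2⟩ := applyList_inj (isSymb_fn f) (isSymb_fn f') (hE.trans rfl)
    injection h1 with h1
    subst h1; subst h2; exact har

theorem pat_take {h : Exp σ} {ts : List (Exp σ)} (hs : IsSymb h)
    (hp : IsPPat (applyList h ts)) (k : ℕ) : IsPPat (applyList h (ts.take k)) := by
  generalize hE : applyList h ts = E at hp
  cases hp with
  | var x => exact absurd hE (by intro hh; exact applyList_eq_var hs hh)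
  | bot =>
    obtain ⟨rfl, rfl⟩ := applyList_eq_bot hs hE
    simpa [applyList] using IsPPat.bot
  | capp c us har hts =>
    obtain ⟨rfl, h2⟩ := applyList_inj hs (isSymb_cn c) (hE.trans rfl)
    rw [← h2] at har hts
    exact IsPPat.capp c (ts.take k) (le_trans (by simpa using List.length_take_le _ _) har)
      (fun t ht => hts t (List.take_subset _ _ ht))
  | fapp f us har hts =>
    obtain ⟨rfl, h2⟩ := applyList_inj hs (isSymb_fn f) (hE.trans rfl)
    rw [← h2] at har hts
    exact IsPPat.fapp f (ts.take k) (lt_of_le_of_lt (by simpa using List.length_take_le _ _) har)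
      (fun t ht => hts t (List.take_subset _ _ ht))

theorem pat_elem {h : Exp σ} {ts : List (Exp σ)} (hs : IsSymb h)
    (hp : IsPPat (applyList h ts)) : ∀ t ∈ ts, IsPPat t := by
  generalize hE : applyList h ts = E at hp
  cases hp with
  | var x => exact absurd hE (by intro hh; exact applyList_eq_var hs hh)
  | bot =>
    obtain ⟨rfl, rfl⟩ := applyList_eq_bot hs hE
    simp
  | capp c us har hts =>
    obtain ⟨rfl, h2⟩ := applyList_inj hs (isSymb_cn c) (hE.trans rfl)
    rw [← h2] at hts; exact hts
  | fapp f us har hts =>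
    obtain ⟨rfl, h2⟩ := applyList_inj hs (isSymb_fn f) (hE.trans rfl)
    rw [← h2] at hts; exact hts

theorem pat_prefix {h : Exp σ} {l l' : List (Exp σ)} (hs : IsSymb h)
    (hp : IsPPat (applyList h (l ++ l'))) : IsPPat (applyList h l) := by
  have := pat_take hs hp l.length
  rwa [List.take_left] at this

theorem mem_zip_same {α : Type*} {l : List α} {p : α × α} (h : p ∈ l.zip l) :
    p.1 = p.2 ∧ p.1 ∈ l := by
  induction l with
  | nil => simp at h
  | cons a l ih =>
    rcases List.mem_cons.1 h with rfl | h
    · exact ⟨rfl, List.mem_cons_self⟩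
    · exact ⟨(ih h).1, List.mem_cons_of_mem _ (ih h).2⟩

theorem mem_zip_getElem {α β : Type*} {l : List α} {l' : List β} {p : α × β}
    (h : p ∈ l.zip l') :
    ∃ i, ∃ (h1 : i < l.length) (h2 : i < l'.length), p = (l[i], l'[i]) := by
  obtain ⟨i, hi, hp⟩ := List.mem_iff_getElem.1 h
  rw [List.length_zip, lt_min_iff] at hi
  exact ⟨i, hi.1, hi.2, by rw [← hp, List.getElem_zip]⟩

theorem getElem_mem_zip {α β : Type*} {l : List α} {l' : List β} {i : ℕ}
    (h1 : i < l.length) (h2 : i < l'.length) : (l[i], l'[i]) ∈ l.zip l' := by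
  have hi : i < (l.zip l').length := by rw [List.length_zip]; omega
  have := List.getElem_mem hi
  rwa [List.getElem_zip] at this

theorem pat_refl {t : Exp σ} (hp : IsPPat t) : Deriv P t t := by
  induction hp with
  | var x => exact ⟨DTree.rr x⟩
  | bot => exact ⟨DTree.bot _⟩
  | capp c ts har hts ih =>
    exact ⟨DTree.dc (.cn c) ts ts (isSymb_cn c) rfl (IsPPat.capp c ts har hts)
      (fun p hp => Classical.choice (by
        obtain ⟨h1, h2⟩ := mem_zip_same hp
        rw [← h1]; exact ih _ h2))⟩
  | fapp f ts har hts ih =>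
    exact ⟨DTree.dc (.fn f) ts ts (isSymb_fn f) rfl (IsPPat.fapp f ts har hts)
      (fun p hp => Classical.choice (by
        obtain ⟨h1, h2⟩ := mem_zip_same hp
        rw [← h1]; exact ih _ h2))⟩

theorem subst_applyList (θ : ℕ → Exp σ) (e : Exp σ) (l : List (Exp σ)) :
    subst θ (applyList e l) = applyList (subst θ e) (l.map (subst θ)) := by
  induction l generalizing e with
  | nil => rfl
  | cons a l ih => rw [applyList_cons', ih]; rfl

theorem subst_ppat {θ : ℕ → Exp σ} (hθ : PSub θ) {t : Exp σ} (hp : IsPPat t) :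
    IsPPat (subst θ t) := by
  induction hp with
  | var x => exact hθ x
  | bot => exact IsPPat.bot
  | capp c ts har hts ih =>
    rw [subst_applyList]
    exact IsPPat.capp c _ (by simpa using har) (by
      intro t ht
      obtain ⟨u, hu, rfl⟩ := List.mem_map.1 ht
      exact ih u hu)
  | fapp f ts har hts ih =>
    rw [subst_applyList]
    exact IsPPat.fapp f _ (by simpa using har) (by
      intro t ht
      obtain ⟨u, hu, rfl⟩ := List.mem_map.1 ht
      exact ih u hu)

theorem pat_app_headE {a b : Exp σ} (hp : IsPPat (Exp.app a b)) :
    (∃ c, headE a = Exp.cn c) ∨ (∃ f, headE a = Exp.fn f) := by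
  generalize hE : Exp.app a b = E at hp
  cases hp with
  | var x => exact nomatch hE
  | bot => exact nomatch hE
  | capp c ts har hts =>
    left
    have := congrArg headE hE
    rw [headE_applyList] at this
    exact ⟨c, by rw [show headE (Exp.app a b) = headE a from rfl] at this; rw [this]; rfl⟩
  | fapp f ts har hts =>
    right
    have := congrArg headE hE
    rw [headE_applyList] at this
    exact ⟨f, by rw [show headE (Exp.app a b) = headE a from rfl] at this; rw [this]; rfl⟩

theorem trans_deriv (hP : WFProg P) {e p : Exp σ} (d : DTree P e p) :
    ∀ {t : Exp σ}, DTree P p t → Deriv P e t := by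
  induction d with
  | bot e =>
    intro t d2
    generalize hE : (Exp.bot : Exp σ) = E at d2
    cases d2 with
    | bot => exact ⟨DTree.bot _⟩
    | rr x => exact nomatch hE
    | dc h es ts hsym hlen hpat ds =>
      obtain ⟨rfl, rfl⟩ := applyList_eq_bot hsym hE.symm
      have hts : ts = [] := List.eq_nil_of_length_eq_zero (by simpa using hlen.symm)
      subst hts
      exact ⟨DTree.bot _⟩
    | opr r hr θ hθ es as t hlen ds d =>
      obtain ⟨h1, -⟩ := applyList_eq_bot (isSymb_fn r.fn) hE.symm
      exact nomatch h1
  | rr x => intro t d2; exact ⟨d2⟩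
  | dc h es ts hsym hlen hpat ds ih =>
    intro t d2
    generalize hE : applyList h ts = E at d2
    cases d2 with
    | bot => exact ⟨DTree.bot _⟩
    | rr x => exact absurd hE (fun hh => applyList_eq_var hsym hh)
    | dc h' es' ts' hsym' hlen' hpat' ds' =>
      obtain ⟨rfl, h2⟩ := applyList_inj hsym' hsym hE.symm
      subst h2
      refine ⟨DTree.dc h' es ts' hsym' (hlen.trans hlen') hpat' ?_⟩
      intro pr hpr
      refine Classical.choice (α := DTree P pr.1 pr.2) ?_
      obtain ⟨i, h1, h2, rfl⟩ := mem_zip_getElem hpr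
      have m1 : (es[i], es'[i]) ∈ es.zip es' := getElem_mem_zip h1 (by omega)
      have m2 : (es'[i], ts'[i]) ∈ es'.zip ts' := getElem_mem_zip (by omega) h2
      exact ih _ m1 (ds' _ m2)
    | opr r hr θ hθ es' as t hlen' ds' d' =>
      exfalso
      obtain ⟨h1, h2⟩ := applyList_inj (isSymb_fn r.fn) hsym hE.symm
      subst h1
      have hfl := pat_fn_len hpat
      have harr := (hP r hr).1.1
      have h3 : (es' ++ as).length = ts.length := by rw [h2]
      rw [List.length_append] at h3
      omega
  | opr r hr θ hθ es as t0 hlen ds d ih1 ih2 =>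
    intro t d2
    obtain ⟨d3⟩ := ih2 d2
    exact ⟨DTree.opr r hr θ hθ es as _ hlen ds d3⟩

theorem lemU (hP : WFProg P) {B p : Exp σ} (d : DTree P B p) :
    ∀ {c t : Exp σ}, DTree P (.app p c) t → Deriv P (.app B c) t := by
  induction d with
  | bot e =>
    intro c t d2
    generalize hE : Exp.app Exp.bot c = E at d2
    cases d2 with
    | bot => exact ⟨DTree.bot _⟩
    | rr x => exact nomatch hE
    | dc h es ts hsym hlen hpat ds =>
      exfalso
      obtain ⟨es₀, rfl, hA⟩ := app_eq_applyList hsym hE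
      obtain ⟨rfl, rfl⟩ := applyList_eq_bot hsym hA.symm
      -- ts has length 1
      rcases ts.eq_nil_or_concat with rfl | ⟨ts₀, t_c, rfl⟩
      · simp at hlen
      rw [List.concat_eq_append, applyList_concat] at hpat
      rcases pat_app_headE hpat with ⟨c', hc⟩ | ⟨f, hf⟩
      · rw [headE_applyList] at hc; exact nomatch hc
      · rw [headE_applyList] at hf; exact nomatch hf
    | opr r hr θ hθ es as t hlen ds d =>
      exfalso
      obtain ⟨es₀, hsplit, hA⟩ := app_eq_applyList (isSymb_fn r.fn) hE
      obtain ⟨h1, -⟩ := applyList_eq_bot (isSymb_fn r.fn) hA.symm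
      exact nomatch h1
  | rr x => intro c t d2; exact ⟨d2⟩
  | dc h es ts hsym hlen hpat ds ih =>
    intro c t d2
    generalize hE : Exp.app (applyList h ts) c = E at d2
    cases d2 with
    | bot => exact ⟨DTree.bot _⟩
    | rr x => exact nomatch hE
    | dc h' es' ts' hsym' hlen' hpat' ds' =>
      obtain ⟨es₀', rfl, hA⟩ := app_eq_applyList hsym' hE
      obtain ⟨rfl, h2⟩ := applyList_inj hsym' hsym hA.symm
      subst h2
      -- now es₀' renamed: applyList h' ts with ts := es₀'?  fix below if errors
      rcases ts'.eq_nil_or_concat with rfl | ⟨ts₀', t_c, hts'⟩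
      · simp at hlen'
      rw [List.concat_eq_append] at hts'
      subst hts'
      have hlen2 : es₀'.length = ts₀'.length := by
        rw [List.length_append, List.length_append] at hlen'; simpa using hlen'
      have happ : Exp.app (applyList h' es) c = applyList h' (es ++ [c]) :=
        (applyList_concat _ _ _).symm
      rw [happ]
      refine ⟨DTree.dc h' (es ++ [c]) (ts₀' ++ [t_c]) hsym'
        (by simp; omega) hpat' ?_⟩
      have hzip1 : (es ++ [c]).zip (ts₀' ++ [t_c]) = es.zip ts₀' ++ [(c, t_c)] := by
        rw [List.zip_append (by omega)]; rfl
      have hzip2 : (es₀' ++ [c]).zip (ts₀' ++ [t_c]) = es₀'.zip ts₀' ++ [(c, t_c)] := by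
        rw [List.zip_append (by omega)]; rfl
      intro pr hpr
      rw [hzip1] at hpr
      refine Classical.choice (α := DTree P pr.1 pr.2) ?_
      rcases List.mem_append.1 hpr with hpr | hpr
      · obtain ⟨i, h1, h2, rfl⟩ := mem_zip_getElem hpr
        have m1 : (es[i], es₀'[i]) ∈ es.zip es₀' := getElem_mem_zip h1 (by omega)
        have m2 : (es₀'[i], ts₀'[i]) ∈ (es₀' ++ [c]).zip (ts₀' ++ [t_c]) := by
          rw [hzip2]
          exact List.mem_append_left _ (getElem_mem_zip (by omega) h2)
        exact trans_deriv hP (ds _ m1) (ds' _ m2)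
      · rw [List.mem_singleton] at hpr
        subst hpr
        refine ⟨ds' (c, t_c) ?_⟩
        rw [hzip2]
        exact List.mem_append_right _ (List.mem_singleton.2 rfl)
    | opr r hr θ hθ es' as t hlen' ds' d' =>
      rcases as.eq_nil_or_concat with rfl | ⟨as₀, c'', has⟩
      · -- as = []
        rw [List.append_nil] at hE
        obtain ⟨es₀', hes', hA⟩ := app_eq_applyList (isSymb_fn r.fn) hE
        obtain ⟨hh, h2⟩ := applyList_inj (isSymb_fn r.fn) hsym hA.symm
        subst hh h2 hes'
        -- now h = .fn r.fn, es₀' = ts (or renamed), es' = ts ++ [c]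
        rcases r.lhs.eq_nil_or_concat with hnil | ⟨lhs₀, q, hl⟩
        · exfalso; rw [hnil] at hlen'; simp at hlen'
        rw [List.concat_eq_append] at hl
        have hlq : r.lhs.map (subst θ) = lhs₀.map (subst θ) ++ [subst θ q] := by
          rw [hl, List.map_append]; rfl
        have hlen3 : es₀'.length = lhs₀.length := by
          rw [hl] at hlen'; simp at hlen'; omega
        have happ : Exp.app (applyList (Exp.fn r.fn) es) c
            = applyList (Exp.fn r.fn) (es ++ [c]) := (applyList_concat _ _ _).symm
        rw [happ]
        have hconc : applyList (Exp.fn r.fn) ((es ++ [c]) ++ []) =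
            applyList (Exp.fn r.fn) (es ++ [c]) := by rw [List.append_nil]
        refine ⟨hconc ▸ DTree.opr r hr θ hθ (es ++ [c]) [] t
          (by rw [hl]; simp; omega) ?_ d'⟩
        have hzip1 : (es ++ [c]).zip (r.lhs.map (subst θ))
            = es.zip (lhs₀.map (subst θ)) ++ [(c, subst θ q)] := by
          rw [hlq, List.zip_append (by simp; omega)]; rfl
        have hzip2 : (es₀' ++ [c]).zip (r.lhs.map (subst θ))
            = es₀'.zip (lhs₀.map (subst θ)) ++ [(c, subst θ q)] := by
          rw [hlq, List.zip_append (by simp; omega)]; rfl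
        intro pr hpr
        rw [hzip1] at hpr
        refine Classical.choice (α := DTree P pr.1 pr.2) ?_
        rcases List.mem_append.1 hpr with hpr | hpr
        · obtain ⟨i, h1, h2, rfl⟩ := mem_zip_getElem hpr
          have m1 : (es[i], es₀'[i]) ∈ es.zip es₀' := getElem_mem_zip h1 (by omega)
          have m2 : (es₀'[i], (lhs₀.map (subst θ))[i]) ∈
              (es₀' ++ [c]).zip (r.lhs.map (subst θ)) := by
            rw [hzip2]
            exact List.mem_append_left _ (getElem_mem_zip (by omega) h2)
          exact trans_deriv hP (ds _ m1) (ds' _ m2)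
        · rw [List.mem_singleton] at hpr
          subst hpr
          refine ⟨ds' (c, subst θ q) ?_⟩
          rw [hzip2]
          exact List.mem_append_right _ (List.mem_singleton.2 rfl)
      · -- as = as₀ ++ [c'']
        exfalso
        rw [List.concat_eq_append] at has
        subst has
        rw [← List.append_assoc, applyList_concat] at hE
        injection hE with hE1 hE2
        obtain ⟨hh, h2⟩ := applyList_inj hsym (isSymb_fn r.fn) hE1
        subst hh
        have hfl := pat_fn_len hpat
        have harr := (hP r hr).1.1
        have h3 : (es' ++ as₀).length = ts.length := by rw [h2]
        rw [List.length_append] at h3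
        omega
  | opr r hr θ hθ es as t0 hlen ds d ih1 ih2 =>
    intro c t d2
    obtain ⟨d3⟩ := ih2 d2
    have happ : Exp.app (applyList (subst θ r.rhs) as) c
        = applyList (subst θ r.rhs) (as ++ [c]) := (applyList_concat _ _ _).symm
    rw [happ] at d3
    have hconc : applyList (Exp.fn r.fn) (es ++ (as ++ [c]))
        = Exp.app (applyList (Exp.fn r.fn) (es ++ as)) c := by
      rw [← List.append_assoc, applyList_concat]
    exact ⟨hconc ▸ DTree.opr r hr θ hθ es (as ++ [c]) t hlen ds d3⟩

theorem app_inv (hP : WFProg P) {E t : Exp σ} (d : DTree P E t) :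
    ∀ {A c : Exp σ}, E = .app A c →
      t = .bot ∨ ∃ p, IsPPat p ∧ Deriv P A p ∧ Deriv P (.app p c) t := by
  induction d with
  | bot e => intro A c hE; exact Or.inl rfl
  | rr x => intro A c hE; exact nomatch hE
  | dc h es ts hsym hlen hpat ds ih =>
    intro A c hE
    obtain ⟨es₀, hes, rfl⟩ := app_eq_applyList hsym hE.symm
    subst hes
    right
    rcases ts.eq_nil_or_concat with rfl | ⟨ts₀, t_c, hts⟩
    · simp at hlen
    rw [List.concat_eq_append] at hts
    subst hts
    have hlen2 : es₀.length = ts₀.length := by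
      rw [List.length_append, List.length_append] at hlen; simpa using hlen
    have hzip : (es₀ ++ [c]).zip (ts₀ ++ [t_c]) = es₀.zip ts₀ ++ [(c, t_c)] := by
      rw [List.zip_append (by omega)]; rfl
    refine ⟨applyList h ts₀, pat_prefix hsym hpat, ?_, ?_⟩
    · refine ⟨DTree.dc h es₀ ts₀ hsym hlen2 (pat_prefix hsym hpat) ?_⟩
      intro pr hpr
      refine ds pr ?_
      rw [hzip]
      exact List.mem_append_left _ hpr
    · have happ : Exp.app (applyList h ts₀) c = applyList h (ts₀ ++ [c]) :=
        (applyList_concat _ _ _).symm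
      rw [happ]
      refine ⟨DTree.dc h (ts₀ ++ [c]) (ts₀ ++ [t_c]) hsym (by simp) hpat ?_⟩
      have hzip2 : (ts₀ ++ [c]).zip (ts₀ ++ [t_c]) = ts₀.zip ts₀ ++ [(c, t_c)] := by
        rw [List.zip_append rfl]; rfl
      intro pr hpr
      rw [hzip2] at hpr
      refine Classical.choice (α := DTree P pr.1 pr.2) ?_
      rcases List.mem_append.1 hpr with hpr | hpr
      · obtain ⟨h1, h2⟩ := mem_zip_same hpr
        rw [← h1]
        exact pat_refl (pat_elem hsym hpat pr.1 (List.mem_append_left _ h2))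
      · rw [List.mem_singleton] at hpr
        subst hpr
        refine ⟨ds (c, t_c) ?_⟩
        rw [hzip]
        exact List.mem_append_right _ (List.mem_singleton.2 rfl)
  | opr r hr θ hθ es as t0 hlen ds d ih1 ih2 =>
    intro A c hE
    rcases as.eq_nil_or_concat with rfl | ⟨as₀, c', has⟩
    · -- as = []
      rw [List.append_nil] at hE
      obtain ⟨es₀, hes, rfl⟩ := app_eq_applyList (isSymb_fn r.fn) hE.symm
      subst hes
      right
      have hwf := (hP r hr).1
      rcases r.lhs.eq_nil_or_concat with hnil | ⟨lhs₀, q, hl⟩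
      · exfalso; rw [hnil] at hlen; simp at hlen
      rw [List.concat_eq_append] at hl
      have hlq : r.lhs.map (subst θ) = lhs₀.map (subst θ) ++ [subst θ q] := by
        rw [hl, List.map_append]; rfl
      have hlen3 : es₀.length = lhs₀.length := by
        rw [hl] at hlen; simp at hlen; omega
      have harity : lhs₀.length < σ.arityF r.fn := by
        have := hwf.1; rw [hl] at this; simp at this; omega
      have hpat0 : IsPPat (applyList (Exp.fn r.fn) (lhs₀.map (subst θ))) := by
        refine IsPPat.fapp r.fn _ (by simpa using harity) ?_
        intro u hu
        obtain ⟨v, hv, rfl⟩ := List.mem_map.1 hu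
        exact subst_ppat hθ (hwf.2.1 v (by rw [hl]; exact List.mem_append_left _ hv)).1
      have hzip : (es₀ ++ [c]).zip (r.lhs.map (subst θ))
          = es₀.zip (lhs₀.map (subst θ)) ++ [(c, subst θ q)] := by
        rw [hlq, List.zip_append (by simp; omega)]; rfl
      refine ⟨applyList (Exp.fn r.fn) (lhs₀.map (subst θ)), hpat0, ?_, ?_⟩
      · refine ⟨DTree.dc (Exp.fn r.fn) es₀ (lhs₀.map (subst θ)) (isSymb_fn r.fn)
          (by simp; omega) hpat0 ?_⟩
        intro pr hpr
        refine ds pr ?_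
        rw [hzip]
        exact List.mem_append_left _ hpr
      · have happ : Exp.app (applyList (Exp.fn r.fn) (lhs₀.map (subst θ))) c
            = applyList (Exp.fn r.fn) (lhs₀.map (subst θ) ++ [c]) :=
          (applyList_concat _ _ _).symm
        rw [happ]
        have hconc : applyList (Exp.fn r.fn) ((lhs₀.map (subst θ) ++ [c]) ++ []) =
            applyList (Exp.fn r.fn) (lhs₀.map (subst θ) ++ [c]) := by
          rw [List.append_nil]
        refine ⟨hconc ▸ DTree.opr r hr θ hθ (lhs₀.map (subst θ) ++ [c]) [] t0
          (by rw [hl]; simp) ?_ d⟩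
        have hzip2 : (lhs₀.map (subst θ) ++ [c]).zip (r.lhs.map (subst θ))
            = (lhs₀.map (subst θ)).zip (lhs₀.map (subst θ)) ++ [(c, subst θ q)] := by
          rw [hlq, List.zip_append rfl]; rfl
        intro pr hpr
        rw [hzip2] at hpr
        refine Classical.choice (α := DTree P pr.1 pr.2) ?_
        rcases List.mem_append.1 hpr with hpr | hpr
        · obtain ⟨h1, h2⟩ := mem_zip_same hpr
          rw [← h1]
          obtain ⟨v, hv, hveq⟩ := List.mem_map.1 h2
          rw [← hveq]
          exact pat_refl (subst_ppat hθ
            (hwf.2.1 v (by rw [hl]; exact List.mem_append_left _ hv)).1)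
        · rw [List.mem_singleton] at hpr
          subst hpr
          refine ⟨ds (c, subst θ q) ?_⟩
          rw [hzip]
          exact List.mem_append_right _ (List.mem_singleton.2 rfl)
    · -- as = as₀ ++ [c']
      rw [List.concat_eq_append] at has
      subst has
      rw [← List.append_assoc, applyList_concat] at hE
      injection hE with hE1 hE2
      subst hE2
      have hd : applyList (subst θ r.rhs) (as₀ ++ [c'])
          = Exp.app (applyList (subst θ r.rhs) as₀) c' := applyList_concat _ _ _
      rcases ih2 hd with hbot | ⟨p, pp, ⟨dp⟩, hpc⟩
      · exact Or.inl hbot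
      · right
        refine ⟨p, pp, ?_, hpc⟩
        rw [← hE1]
        exact ⟨DTree.opr r hr θ hθ es as₀ p hlen ds dp⟩

theorem den_app_sub (hP : WFProg P) {A B c : Exp σ} (hAB : den P A = den P B) :
    den P (.app A c) ⊆ den P (.app B c) := by
  rintro t ⟨hpt, ⟨tr⟩⟩
  rcases app_inv hP tr rfl with rfl | ⟨p, pp, dA, ⟨dpc⟩⟩
  · exact ⟨hpt, ⟨DTree.bot _⟩⟩
  · have hpB : p ∈ den P B := hAB ▸ (⟨pp, dA⟩ : p ∈ den P A)
    obtain ⟨-, ⟨dB⟩⟩ := hpB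
    exact ⟨hpt, lemU hP dB dpc⟩

theorem extEquiv_succ (hP : WFProg P) {n : ℕ} {e e' : Exp σ}
    (h : ExtEquiv P n e e') : ExtEquiv P (n + 1) e e' := by
  intro es hlen
  rcases es.eq_nil_or_concat with rfl | ⟨es₀, c, hes⟩
  · simp at hlen
  rw [List.concat_eq_append] at hes
  subst hes
  rw [applyList_concat, applyList_concat]
  have h0 : es₀.length = n := by rw [List.length_append] at hlen; simpa using hlen
  have hAB := h es₀ h0
  exact Set.Subset.antisymm (den_app_sub hP hAB) (den_app_sub hP hAB.symm)

end ExtAux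

/-- **Proposition 1(i)**: if `e ∼ₙ e'` then `e ∼ₘ e'` for all `m > n`. -/
theorem extEquiv_mono (σ : Sig) (P : Program σ) (hP : WFProg P)
    (e e' : Exp σ) (n : ℕ) (h : ExtEquiv P n e e') :
    ∀ m, n < m → ExtEquiv P m e e' := by
  have key : ∀ k, ExtEquiv P (n + k) e e' := by
    intro k
    induction k with
    | zero => exact h
    | succ k ih => exact extEquiv_succ hP ih
  intro m hm
  have := key (m - n)
  rwa [show n + (m - n) = m from by omega] at this
end

section
/- Let P' = P ⊎ P'' be a program without extra variables such that fs(P) ∩ defs(P'') = ∅. Then for every HOCRWL derivation of P' ⊢ a ⇒ s with defs(P'') ∩ fs(a) = ∅, one has defs(P'') ∩ fs(s) = ∅, and every premise a' ⇒ s' occurring in that derivation satisfies defs(P'') ∩ (fs(a') ∪ fs(s')) = ∅; in particular no rule of P'' is used in the derivation, so P ⊢ a ⇒ s. -/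
variable {σ : Sig}

/-- The statements `e' ⇒ t'` occurring strictly below the root of a
derivation tree. -/
def DTree.sub {P : Program σ} : {e t : Exp σ} → DTree P e t → Set (Exp σ × Exp σ)
  | _, _, .bot _ => ∅
  | _, _, .rr _ => ∅
  | _, _, .dc _h es ts _hsym _hlen _hpat ds =>
      ⋃ p : {p // p ∈ es.zip ts}, insert (p.1.1, p.1.2) (ds p.1 p.2).sub
  | _, _, .opr r _hr θ _hθ es as t _hlen ds d =>
      (⋃ p : {p // p ∈ es.zip (r.lhs.map (subst θ))},
        insert (p.1.1, p.1.2) (ds p.1 p.2).sub) ∪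
      insert (applyList (subst θ r.rhs) as, t) d.sub

/-- All statements `e' ⇒ t'` occurring in a derivation tree (its root
statement together with all statements of its subderivations). -/
def DTree.stmts {P : Program σ} {e t : Exp σ} (d : DTree P e t) :
    Set (Exp σ × Exp σ) :=
  insert (e, t) d.sub

section AuxLemmas

variable {σ : Sig}

lemma mem_expFS_applyList {x : σ.FS} (h : Exp σ) (es : List (Exp σ)) :
    x ∈ expFS (applyList h es) ↔ x ∈ expFS h ∨ ∃ e ∈ es, x ∈ expFS e := by
  induction es generalizing h with
  | nil => simp [applyList]
  | cons e es ih =>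
    rw [show applyList h (e :: es) = applyList (Exp.app h e) es from rfl, ih]
    simp only [show expFS (Exp.app h e) = expFS h ∪ expFS e from rfl,
      Set.mem_union, List.mem_cons]
    constructor
    · rintro ((h1 | h1) | ⟨e', he', h1⟩)
      · exact Or.inl h1
      · exact Or.inr ⟨e, Or.inl rfl, h1⟩
      · exact Or.inr ⟨e', Or.inr he', h1⟩
    · rintro (h1 | ⟨e', (rfl | he'), h1⟩)
      · exact Or.inl (Or.inl h1)
      · exact Or.inl (Or.inr h1)
      · exact Or.inr ⟨e', he', h1⟩

lemma exists_mem_zip {α β : Type*} {es : List α} {ts : List β}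
    (h : es.length = ts.length) {t : β} (ht : t ∈ ts) :
    ∃ e, (e, t) ∈ es.zip ts := by
  induction es generalizing ts with
  | nil => cases ts <;> simp_all
  | cons e es ih =>
    cases ts with
    | nil => simp at ht
    | cons t' ts =>
      rcases List.mem_cons.mp ht with rfl | ht'
      · exact ⟨e, List.mem_cons_self⟩
      · obtain ⟨e', he'⟩ := ih (by simpa using h) ht'
        exact ⟨e', List.mem_cons_of_mem _ he'⟩

lemma mem_expFS_subst {θ : ℕ → Exp σ} {x : σ.FS} {t : Exp σ}
    (hx : x ∈ expFS (subst θ t)) :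
    x ∈ expFS t ∨ ∃ y ∈ occVars t, x ∈ expFS (θ y) := by
  induction t with
  | var y => exact Or.inr ⟨y, by simp [occVars], hx⟩
  | fn f => exact Or.inl hx
  | cn c => exact absurd hx (by simp [subst, expFS])
  | bot => exact absurd hx (by simp [subst, expFS])
  | app a b iha ihb =>
    rcases (hx : x ∈ expFS (subst θ a) ∪ expFS (subst θ b)) with hx' | hx'
    · rcases iha hx' with h1 | ⟨y, hy, h1⟩
      · exact Or.inl (Set.mem_union_left _ h1)
      · exact Or.inr ⟨y, by simp [occVars, hy], h1⟩
    · rcases ihb hx' with h1 | ⟨y, hy, h1⟩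
      · exact Or.inl (Set.mem_union_right _ h1)
      · exact Or.inr ⟨y, by simp [occVars, hy], h1⟩

lemma expFS_theta_mem {θ : ℕ → Exp σ} {x : σ.FS} {y : ℕ}
    (hxy : x ∈ expFS (θ y)) {t : Exp σ} (hy : y ∈ occVars t) :
    x ∈ expFS (subst θ t) := by
  induction t with
  | var z => simp [occVars] at hy; subst hy; exact hxy
  | fn f => simp [occVars] at hy
  | cn c => simp [occVars] at hy
  | bot => simp [occVars] at hy
  | app a b iha ihb =>
    rcases List.mem_append.mp (hy : y ∈ occVars a ++ occVars b) with h1 | h1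
    · exact Set.mem_union_left _ (iha h1)
    · exact Set.mem_union_right _ (ihb h1)

end AuxLemmas
/-- **Key property for Lemma 1**: let `P' = P ⊎ P''` be a program without extra
variables with `fs(P) ∩ defs(P'') = ∅`.  Then for every derivation of
`P' ⊢ a ⇒ s` with `defs(P'') ∩ fs(a) = ∅` one has `defs(P'') ∩ fs(s) = ∅`,
every statement `a' ⇒ s'` occurring in the derivation satisfies
`defs(P'') ∩ (fs(a') ∪ fs(s')) = ∅`, and (no rule of `P''` being used)
`P ⊢ a ⇒ s`. -/
theorem safeExt_derivation (σ : Sig) (P P'' : Program σ)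
    (hwf : WFProg (P ∪ P'')) (hsep : Disjoint P P'')
    (hdisj : Disjoint (defs P'') (progFS P))
    (a s : Exp σ) (d : DTree (P ∪ P'') a s)
    (ha : Disjoint (defs P'') (expFS a)) :
    Disjoint (defs P'') (expFS s) ∧
    (∀ p ∈ d.stmts, Disjoint (defs P'') (expFS p.1 ∪ expFS p.2)) ∧
    Deriv P a s := by
  revert ha
  induction d with
  | bot e =>
    intro ha
    refine ⟨by simp [expFS], ?_, ⟨DTree.bot e⟩⟩
    intro p hp
    simp only [DTree.stmts, DTree.sub, Set.mem_insert_iff, Set.mem_empty_iff_false,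
      or_false] at hp
    subst hp
    simpa [expFS] using ha
  | rr x =>
    intro ha
    refine ⟨by simp [expFS], ?_, ⟨DTree.rr x⟩⟩
    intro p hp
    simp only [DTree.stmts, DTree.sub, Set.mem_insert_iff, Set.mem_empty_iff_false,
      or_false] at hp
    subst hp
    simpa [expFS] using ha
  | dc h es ts hsym hlen hpat ds ih =>
    intro ha
    have hamem := Set.disjoint_left.mp ha
    have hes : ∀ e ∈ es, Disjoint (defs P'') (expFS e) := by
      intro e he
      rw [Set.disjoint_left]
      intro x hx hxe
      exact hamem hx ((mem_expFS_applyList h es).mpr (Or.inr ⟨e, he, hxe⟩))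
    have hh : ∀ x ∈ defs P'', x ∉ expFS h := fun x hx hxh =>
      hamem hx ((mem_expFS_applyList h es).mpr (Or.inl hxh))
    have ihp := fun p (hp : p ∈ es.zip ts) => ih p hp (hes p.1 (List.of_mem_zip hp).1)
    have hts : Disjoint (defs P'') (expFS (applyList h ts)) := by
      rw [Set.disjoint_left]
      intro x hx hxt
      rcases (mem_expFS_applyList h ts).mp hxt with h1 | ⟨t, htts, h1⟩
      · exact hh x hx h1
      · obtain ⟨e, hez⟩ := exists_mem_zip hlen htts
        exact Set.disjoint_left.mp (ihp (e, t) hez).1 hx h1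
    refine ⟨hts, ?_, ?_⟩
    · intro p hp
      simp only [DTree.stmts, DTree.sub, Set.mem_insert_iff, Set.mem_iUnion] at hp
      rcases hp with heq | ⟨⟨q, hq⟩, heq | hpq'⟩
      · subst heq
        rw [Set.disjoint_left]
        intro x hx hx1
        rcases (Set.mem_union _ _ _).mp hx1 with hx1 | hx1
        · exact hamem hx hx1
        · exact Set.disjoint_left.mp hts hx hx1
      · subst heq
        rw [Set.disjoint_left]
        intro x hx hx1
        rcases (Set.mem_union _ _ _).mp hx1 with hx1 | hx1
        · exact Set.disjoint_left.mp (hes q.1 (List.of_mem_zip hq).1) hx hx1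
        · exact Set.disjoint_left.mp (ihp q hq).1 hx hx1
      · exact (ihp q hq).2.1 p (Set.mem_insert_iff.mpr (Or.inr hpq'))
    · have hprem : ∀ p (hp : p ∈ es.zip ts), Nonempty (DTree P p.1 p.2) :=
        fun p hp => (ihp p hp).2.2
      exact ⟨DTree.dc h es ts hsym hlen hpat (fun p hp => (hprem p hp).some)⟩
  | opr r hr θ hθ es as t hlen ds d ih ihd =>
    intro ha
    have hamem := Set.disjoint_left.mp ha
    have hrP : r ∈ P := by
      rcases hr with hr' | hr'
      · exact hr'
      · exact absurd ((mem_expFS_applyList (Exp.fn r.fn) (es ++ as)).mpr (Or.inl rfl))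
          (hamem ⟨r, hr', rfl⟩)
    have hrule : ∀ x ∈ defs P'', x ∉ ruleFS r := fun x hx hxr =>
      Set.disjoint_left.mp hdisj hx (Set.mem_biUnion hrP hxr)
    have hargs : ∀ e ∈ es ++ as, ∀ x ∈ defs P'', x ∉ expFS e := fun e he x hx hxe =>
      hamem hx ((mem_expFS_applyList _ _).mpr (Or.inr ⟨e, he, hxe⟩))
    have ihp := fun p (hp : p ∈ es.zip (r.lhs.map (subst θ))) =>
      ih p hp (Set.disjoint_left.mpr
        (hargs p.1 (List.mem_append.mpr (Or.inl (List.of_mem_zip hp).1))))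
    have hlhs : ∀ t' ∈ r.lhs, ∀ x ∈ defs P'', x ∉ expFS (subst θ t') := by
      intro t' ht' x hx hxt
      obtain ⟨e, hez⟩ := exists_mem_zip (by simpa using hlen)
        (List.mem_map_of_mem (f := subst θ) ht')
      exact Set.disjoint_left.mp (ihp (e, subst θ t') hez).1 hx hxt
    have hbody : Disjoint (defs P'') (expFS (applyList (subst θ r.rhs) as)) := by
      rw [Set.disjoint_left]
      intro x hx hxb
      rcases (mem_expFS_applyList _ _).mp hxb with h1 | ⟨e, he, h1⟩
      · rcases mem_expFS_subst h1 with h2 | ⟨y, hy, h2⟩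
        · exact hrule x hx (Set.mem_insert_iff.mpr (Or.inr (Set.mem_union_right _ h2)))
        · obtain ⟨tt, httl, hyt⟩ := List.mem_flatMap.mp ((hwf r hr).2 y hy)
          exact hlhs tt httl x hx (expFS_theta_mem h2 hyt)
      · exact hargs e (List.mem_append.mpr (Or.inr he)) x hx h1
    obtain ⟨hs, hstb, hderb⟩ := ihd hbody
    refine ⟨hs, ?_, ?_⟩
    · intro p hp
      simp only [DTree.stmts, DTree.sub, Set.mem_insert_iff, Set.mem_union,
        Set.mem_iUnion] at hp
      rcases hp with heq | (⟨⟨q, hq⟩, heq | hpq'⟩ | heq | hp')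
      · subst heq
        rw [Set.disjoint_left]
        intro x hx hx1
        rcases (Set.mem_union _ _ _).mp hx1 with hx1 | hx1
        · exact hamem hx hx1
        · exact Set.disjoint_left.mp hs hx hx1
      · subst heq
        rw [Set.disjoint_left]
        intro x hx hx1
        rcases (Set.mem_union _ _ _).mp hx1 with hx1 | hx1
        · exact hargs q.1 (List.mem_append.mpr (Or.inl (List.of_mem_zip hq).1)) x hx hx1
        · exact Set.disjoint_left.mp (ihp q hq).1 hx hx1
      · exact (ihp q hq).2.1 p (Set.mem_insert_iff.mpr (Or.inr hpq'))
      · subst heq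
        rw [Set.disjoint_left]
        intro x hx hx1
        rcases (Set.mem_union _ _ _).mp hx1 with hx1 | hx1
        · exact Set.disjoint_left.mp hbody hx hx1
        · exact Set.disjoint_left.mp hs hx hx1
      · exact hstb p (Set.mem_insert_iff.mpr (Or.inr hp'))
    · have hprem : ∀ p (hp : p ∈ es.zip (r.lhs.map (subst θ))), Nonempty (DTree P p.1 p.2) :=
        fun p hp => (ihp p hp).2.2
      obtain ⟨db⟩ := hderb
      exact ⟨DTree.opr r hrP θ hθ es as t hlen (fun p hp => (hprem p hp).some) db⟩
end
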